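/- Let l, k > 0 and let E be an ellipse (the image of the unit circle under an invertible affine map of ℝ²) such that E is contained in the solid rectangle [0,l] × [0,k] and E has nonempty intersection with each of the four sides of the rectangle. Then there exists v ∈ (0, k) such that E = {(x,y) ∈ ℝ² : k²x² + l²y² − 2l(k−2v)xy − 2lkv·x − 2l²v·y + l²v² = 0}. -/

import Mathlib

/-- The unit circle in `ℝ × ℝ`. -/
def unitCircle : Set (ℝ × ℝ) := {p : ℝ × ℝ | p.1 ^ 2 + p.2 ^ 2 = 1}

/-- A set is an ellipse if it is the image of the unit circle under an
invertible affine map of the plane. -/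
def IsEllipse (E : Set (ℝ × ℝ)) : Prop :=
  ∃ f : (ℝ × ℝ) ≃ᵃ[ℝ] (ℝ × ℝ), E = (f : (ℝ × ℝ) → (ℝ × ℝ)) '' unitCircle

lemma aux_axis (l a b c : ℝ) (hl : 0 < l)
    (hbd : ∀ u₁ u₂ : ℝ, u₁^2 + u₂^2 = 1 → 0 ≤ c + (a*u₁ + b*u₂) ∧ c + (a*u₁ + b*u₂) ≤ l)
    (h0 : ∃ u₁ u₂ : ℝ, u₁^2 + u₂^2 = 1 ∧ c + (a*u₁ + b*u₂) = 0)
    (h1 : ∃ u₁ u₂ : ℝ, u₁^2 + u₂^2 = 1 ∧ c + (a*u₁ + b*u₂) = l) :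
    a^2 + b^2 = l^2/4 ∧ c = l/2 := by
  obtain ⟨p₁, p₂, hp, hp0⟩ := h0
  obtain ⟨q₁, q₂, hq, hql⟩ := h1
  set r := Real.sqrt (a^2+b^2) with hr
  have hr0 : 0 ≤ r := Real.sqrt_nonneg _
  have hr2 : r^2 = a^2+b^2 := Real.sq_sqrt (by positivity)
  have hcr : c ≤ r := by nlinarith [sq_nonneg (a*p₂ - b*p₁)]
  have hlcr : l - c ≤ r := by nlinarith [sq_nonneg (a*q₂ - b*q₁)]
  have hrpos : 0 < r := by
    rcases hr0.lt_or_eq with h | h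
    · exact h
    · exfalso
      have hab : a^2+b^2 = 0 := by rw [← hr2, ← h]; ring
      have ha : a = 0 := by nlinarith
      have hb : b = 0 := by nlinarith
      rw [ha, hb] at hp0 hql
      nlinarith
  have hrne : r ≠ 0 := ne_of_gt hrpos
  have hu1 : (a/r)^2 + (b/r)^2 = 1 := by
    field_simp
    linear_combination hr2.symm
  have hu2 : (-(a/r))^2 + (-(b/r))^2 = 1 := by simpa using hu1
  have har : a*(a/r) + b*(b/r) = r := by
    field_simp
    linear_combination hr2.symm
  have har2 : a*(-(a/r)) + b*(-(b/r)) = -r := by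
    linear_combination -har
  have hb1 := (hbd _ _ hu1).2
  have hb2 := (hbd _ _ hu2).1
  rw [har] at hb1
  rw [har2] at hb2
  have hc : c = l/2 := by linarith
  have hrl : r = l/2 := by linarith
  refine ⟨?_, hc⟩
  nlinarith [hr2, hrl]

set_option maxHeartbeats 1000000 in
theorem stmt_1 (l k : ℝ) (hl : 0 < l) (hk : 0 < k) (E : Set (ℝ × ℝ))
    (hE : IsEllipse E)
    (hsub : E ⊆ Set.Icc (0 : ℝ) l ×ˢ Set.Icc (0 : ℝ) k)
    (h1 : (E ∩ segment ℝ ((0 : ℝ), (0 : ℝ)) (l, 0)).Nonempty)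
    (h2 : (E ∩ segment ℝ ((0 : ℝ), (0 : ℝ)) (0, k)).Nonempty)
    (h3 : (E ∩ segment ℝ ((0 : ℝ), k) (l, k)).Nonempty)
    (h4 : (E ∩ segment ℝ (l, (0 : ℝ)) (l, k)).Nonempty) :
    ∃ v ∈ Set.Ioo (0 : ℝ) k, E = {p : ℝ × ℝ |
      k ^ 2 * p.1 ^ 2 + l ^ 2 * p.2 ^ 2 - 2 * l * (k - 2 * v) * p.1 * p.2
        - 2 * l * k * v * p.1 - 2 * l ^ 2 * v * p.2 + l ^ 2 * v ^ 2 = 0} := by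
  obtain ⟨f, hEf⟩ := hE
  set L := f.linear with hLdef
  set a := (L (1, 0)).1 with ha
  set b := (L (0, 1)).1 with hb
  set d := (L (1, 0)).2 with hd
  set e := (L (0, 1)).2 with he
  set c1 := (f 0).1 with hc1
  set c2 := (f 0).2 with hc2
  have hLu : ∀ u : ℝ × ℝ, L u = (a * u.1 + b * u.2, d * u.1 + e * u.2) := by
    intro u
    have hu : (u : ℝ × ℝ) = u.1 • ((1:ℝ), (0:ℝ)) + u.2 • ((0:ℝ), (1:ℝ)) := by
      ext <;> simp
    rw [hu, map_add, map_smul, map_smul]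
    ext <;> simp [ha, hb, hd, he] <;> ring
  have hf : ∀ u : ℝ × ℝ, f u = (c1 + (a * u.1 + b * u.2), c2 + (d * u.1 + e * u.2)) := by
    intro u
    have h0 : f u = L u + f 0 := by
      have := f.map_vadd (0 : ℝ × ℝ) u
      simpa using this
    rw [h0, hLu u]
    ext <;> simp [hc1, hc2] <;> ring
  -- membership of image points
  have hmemE : ∀ u : ℝ × ℝ, u.1 ^ 2 + u.2 ^ 2 = 1 → f u ∈ E := by
    intro u hu
    rw [hEf]
    exact ⟨u, hu, rfl⟩
  have hbd1 : ∀ u₁ u₂ : ℝ, u₁^2 + u₂^2 = 1 →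
      0 ≤ c1 + (a*u₁ + b*u₂) ∧ c1 + (a*u₁ + b*u₂) ≤ l := by
    intro u₁ u₂ hu
    have hm := hsub (hmemE (u₁, u₂) hu)
    rw [hf (u₁, u₂)] at hm
    exact hm.1
  have hbd2 : ∀ u₁ u₂ : ℝ, u₁^2 + u₂^2 = 1 →
      0 ≤ c2 + (d*u₁ + e*u₂) ∧ c2 + (d*u₁ + e*u₂) ≤ k := by
    intro u₁ u₂ hu
    have hm := hsub (hmemE (u₁, u₂) hu)
    rw [hf (u₁, u₂)] at hm
    exact hm.2
  -- extract touch points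
  have hx0 : ∃ u₁ u₂ : ℝ, u₁^2 + u₂^2 = 1 ∧ c1 + (a*u₁ + b*u₂) = 0 := by
    obtain ⟨p, hpE, hpseg⟩ := h2
    obtain ⟨s, t, hs, ht, hst, hp⟩ := hpseg
    have hp1 : p.1 = 0 := by rw [← hp]; simp
    rw [hEf] at hpE
    obtain ⟨u, hu, hup⟩ := hpE
    refine ⟨u.1, u.2, hu, ?_⟩
    have := congrArg Prod.fst hup
    rw [hf u] at this
    simpa [hp1] using this
  have hxl : ∃ u₁ u₂ : ℝ, u₁^2 + u₂^2 = 1 ∧ c1 + (a*u₁ + b*u₂) = l := by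
    obtain ⟨p, hpE, hpseg⟩ := h4
    obtain ⟨s, t, hs, ht, hst, hp⟩ := hpseg
    have hp1 : p.1 = l := by
      rw [← hp]; simp; linear_combination l * hst
    rw [hEf] at hpE
    obtain ⟨u, hu, hup⟩ := hpE
    refine ⟨u.1, u.2, hu, ?_⟩
    have := congrArg Prod.fst hup
    rw [hf u] at this
    simpa [hp1] using this
  have hy0 : ∃ u₁ u₂ : ℝ, u₁^2 + u₂^2 = 1 ∧ c2 + (d*u₁ + e*u₂) = 0 := by
    obtain ⟨p, hpE, hpseg⟩ := h1
    obtain ⟨s, t, hs, ht, hst, hp⟩ := hpseg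
    have hp2 : p.2 = 0 := by rw [← hp]; simp
    rw [hEf] at hpE
    obtain ⟨u, hu, hup⟩ := hpE
    refine ⟨u.1, u.2, hu, ?_⟩
    have := congrArg Prod.snd hup
    rw [hf u] at this
    simpa [hp2] using this
  have hyk : ∃ u₁ u₂ : ℝ, u₁^2 + u₂^2 = 1 ∧ c2 + (d*u₁ + e*u₂) = k := by
    obtain ⟨p, hpE, hpseg⟩ := h3
    obtain ⟨s, t, hs, ht, hst, hp⟩ := hpseg
    have hp2 : p.2 = k := by
      rw [← hp]; simp; linear_combination k * hst
    rw [hEf] at hpE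
    obtain ⟨u, hu, hup⟩ := hpE
    refine ⟨u.1, u.2, hu, ?_⟩
    have := congrArg Prod.snd hup
    rw [hf u] at this
    simpa [hp2] using this
  obtain ⟨hA, hC1⟩ := aux_axis l a b c1 hl hbd1 hx0 hxl
  obtain ⟨hD, hC2⟩ := aux_axis k d e c2 hk hbd2 hy0 hyk
  -- determinant nonzero
  have hdet : a * e - b * d ≠ 0 := by
    intro h0
    have hz : L (e, -d) = 0 := by
      rw [hLu (e, -d)]
      ext <;> simp <;> linarith [h0]
    have := L.map_eq_zero_iff.mp hz
    have he0 : e = 0 := by simpa using congrArg Prod.fst this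
    have hd0 : d = 0 := by simpa using congrArg Prod.snd this
    rw [he0, hd0] at hD
    nlinarith
  set m := a * d + b * e with hm
  set v := k / 2 - 2 * m / l with hv
  have hlne : l ≠ 0 := ne_of_gt hl
  have hveq : l * v = l * k / 2 - 2 * m := by
    rw [hv]; field_simp
  have hm2 : m ^ 2 < l ^ 2 * k ^ 2 / 16 := by
    have h1 : (a*e - b*d)^2 > 0 := by positivity
    nlinarith [hA, hD, sq_nonneg (a*e - b*d)]
  have hv0 : 0 < v := by
    by_contra h
    push_neg at h
    have hlv : l * v ≤ 0 := mul_nonpos_of_nonneg_of_nonpos hl.le h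
    rw [hveq] at hlv
    nlinarith [hm2, mul_pos hl hk]
  have hvk : v < k := by
    by_contra h
    push_neg at h
    have hlv : l * k ≤ l * v := mul_le_mul_of_nonneg_left h hl.le
    rw [hveq] at hlv
    nlinarith [hm2, mul_pos hl hk]
  clear_value v m
  refine ⟨v, ⟨hv0, hvk⟩, ?_⟩
  rw [hEf]
  ext q
  set u := f.symm q with hu
  have hqu : f u = q := f.apply_symm_apply q
  have hq1 : q.1 = c1 + (a * u.1 + b * u.2) := by
    rw [← hqu, hf u]
  have hq2 : q.2 = c2 + (d * u.1 + e * u.2) := by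
    rw [← hqu, hf u]
  have hmem : q ∈ (f : (ℝ × ℝ) → (ℝ × ℝ)) '' unitCircle ↔ u.1 ^ 2 + u.2 ^ 2 = 1 := by
    constructor
    · rintro ⟨w, hw, hwq⟩
      have : w = u := by rw [hu, ← hwq]; simp
      rw [← this]; exact hw
    · intro h
      exact ⟨u, h, hqu⟩
  rw [hmem, Set.mem_setOf_eq, hq1, hq2, hC1, hC2]
  have key : k ^ 2 * (l/2 + (a * u.1 + b * u.2)) ^ 2 + l ^ 2 * (k/2 + (d * u.1 + e * u.2)) ^ 2
      - 2 * l * (k - 2 * v) * (l/2 + (a * u.1 + b * u.2)) * (k/2 + (d * u.1 + e * u.2))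
      - 2 * l * k * v * (l/2 + (a * u.1 + b * u.2)) - 2 * l ^ 2 * v * (k/2 + (d * u.1 + e * u.2))
      + l ^ 2 * v ^ 2
      = 4 * (a*e - b*d)^2 * (u.1 ^ 2 + u.2 ^ 2 - 1) := by
    have hveq' : l * v = l * k / 2 - 2*(a*d+b*e) := by rw [hveq, hm]
    linear_combination (4*(l/2 + (a * u.1 + b * u.2))*(k/2 + (d * u.1 + e * u.2))
        - 2*k*(l/2 + (a * u.1 + b * u.2)) - 2*l*(k/2 + (d * u.1 + e * u.2))
        + l*v + l*k/2 - 2*(a*d+b*e)) * hveq'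
      + (4*(a^2+b^2) - 4*(a * u.1 + b * u.2)^2) * hD
      + (k^2 - 4*(d * u.1 + e * u.2)^2) * hA
  rw [key]
  constructor
  · intro h; rw [h]; ring
  · intro h
    have h4 : (4 : ℝ) * (a*e - b*d)^2 ≠ 0 := by positivity
    have := mul_eq_zero.mp h
    rcases this with h' | h'
    · exact absurd h' h4
    · linarith [h']
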